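/- If the set of Wieferich primes is infinite, then the set of μ-hits is infinite; in particular there are infinitely many distinct triples of the form (1, 2^L − 1, 2^L) with log(2^L) > μ((2^L − 1)·2^L). -/

import Mathlib

set_option exponentiation.threshold 5000
set_option linter.all false
set_option maxHeartbeats 2000000

private lemma term_nonneg {p k : ℕ} (hp : 2 ≤ p) (hk : 1 ≤ k) :
    Real.log p + Real.log k ≤ k * Real.log p := by
  have hnat : k ≤ p ^ (k - 1) := by
    calc k ≤ 2 ^ (k - 1) := by have := Nat.lt_two_pow_self (n := k - 1); omega
      _ ≤ p ^ (k - 1) := Nat.pow_le_pow_left hp _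
  have hk0 : (0:ℝ) < k := by exact_mod_cast hk
  have hlog : Real.log k ≤ Real.log ((p ^ (k - 1) : ℕ) : ℝ) :=
    Real.log_le_log hk0 (by exact_mod_cast hnat)
  rw [Nat.cast_pow, Real.log_pow, Nat.cast_sub hk, Nat.cast_one, sub_mul, one_mul] at hlog
  have hlp : 0 ≤ Real.log p := Real.log_nonneg (by exact_mod_cast hp.trans' one_le_two)
  linarith

private lemma term_gain {p k : ℕ} (hp : 2 ≤ p) (hk : 2 ≤ k) :
    Real.log p + Real.log k ≤ k * Real.log p - (Real.log p - Real.log 2) := by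
  have hnat : k ≤ 2 * p ^ (k - 2) := by
    have h1 := Nat.lt_two_pow_self (n := k - 1)
    have h2 : 2 ^ (k - 1) = 2 * 2 ^ (k - 2) := by
      rw [← pow_succ']
      congr 1
      omega
    have h3 : (2:ℕ) ^ (k - 2) ≤ p ^ (k - 2) := Nat.pow_le_pow_left hp _
    omega
  have hk0 : (0:ℝ) < k := by exact_mod_cast (by omega : 0 < k)
  have hpR : (0:ℝ) < p := by exact_mod_cast (by omega : 0 < p)
  have hlog : Real.log k ≤ Real.log ((2 * p ^ (k - 2) : ℕ) : ℝ) :=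
    Real.log_le_log hk0 (by exact_mod_cast hnat)
  have hval : Real.log ((2 * p ^ (k - 2) : ℕ) : ℝ)
      = Real.log 2 + ((k:ℝ) - 2) * Real.log p := by
    push_cast
    rw [Real.log_mul (by norm_num) (by positivity), Real.log_pow, Nat.cast_sub hk]
    push_cast
    ring
  rw [hval] at hlog
  have hlp : 0 ≤ Real.log p := Real.log_nonneg (by exact_mod_cast hp.trans' one_le_two)
  nlinarith [hlog]

private lemma log_factor (n : ℕ) (hn : n ≠ 0) :
    Real.log n = ∑ p ∈ n.primeFactors, (n.factorization p : ℝ) * Real.log p := by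
  conv_lhs => rw [← Nat.factorization_prod_pow_eq_self hn,
    Nat.prod_factorization_eq_prod_primeFactors (fun p k => p ^ k)]
  rw [Nat.cast_prod, Real.log_prod]
  · refine Finset.sum_congr rfl fun p hp => ?_
    rw [Nat.cast_pow, Real.log_pow]
  · intro p hp
    have hpp : p.Prime := (Nat.mem_primeFactors.1 hp).1
    have : p ^ n.factorization p ≠ 0 := pow_ne_zero _ hpp.pos.ne'
    exact_mod_cast this

private lemma mu_factor (μ : ℕ → ℝ)
    (hμp : ∀ p n : ℕ, p.Prime → 0 < n → μ (p ^ n) = Real.log p + Real.log n)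
    (hμmul : ∀ m n : ℕ, 0 < m → 0 < n → Nat.Coprime m n → μ (m * n) = μ m + μ n) :
    ∀ n : ℕ, 0 < n →
      μ n = ∑ p ∈ n.primeFactors, (Real.log p + Real.log (n.factorization p)) := by
  have h1 : μ 1 = 0 := by
    have := hμmul 1 1 one_pos one_pos (Nat.coprime_one_left 1)
    simp only [mul_one] at this
    linarith
  intro n
  induction n using Nat.recOnPosPrimePosCoprime with
  | prime_pow p k hpp hk =>
    intro _
    rw [hμp p k hpp hk, Nat.primeFactors_prime_pow (by omega) hpp,
      Finset.sum_singleton, hpp.factorization_pow, Finsupp.single_eq_same]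
  | zero => intro h; exact absurd h (lt_irrefl 0)
  | one => intro _; simp [h1]
  | coprime a b ha hb hab iha ihb =>
    intro _
    have ha0 : 0 < a := by omega
    have hb0 : 0 < b := by omega
    rw [hμmul a b ha0 hb0 hab, iha ha0, ihb hb0, hab.primeFactors_mul,
      Finset.sum_union hab.disjoint_primeFactors]
    have hfa : ∀ p ∈ a.primeFactors, (a * b).factorization p = a.factorization p := by
      intro p hp
      rw [Nat.factorization_mul ha0.ne' hb0.ne', Finsupp.add_apply]
      have hnb : p ∉ b.primeFactors := Finset.disjoint_left.mp hab.disjoint_primeFactors hp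
      rw [← Nat.support_factorization, Finsupp.notMem_support_iff] at hnb
      omega
    have hfb : ∀ p ∈ b.primeFactors, (a * b).factorization p = b.factorization p := by
      intro p hp
      rw [Nat.factorization_mul ha0.ne' hb0.ne', Finsupp.add_apply]
      have hna : p ∉ a.primeFactors := Finset.disjoint_right.mp hab.disjoint_primeFactors hp
      rw [← Nat.support_factorization, Finsupp.notMem_support_iff] at hna
      omega
    congr 1
    · exact Finset.sum_congr rfl fun p hp => by rw [hfa p hp]
    · exact Finset.sum_congr rfl fun p hp => by rw [hfb p hp]

private lemma mu_le (μ : ℕ → ℝ)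
    (hμp : ∀ p n : ℕ, p.Prime → 0 < n → μ (p ^ n) = Real.log p + Real.log n)
    (hμmul : ∀ m n : ℕ, 0 < m → 0 < n → Nat.Coprime m n → μ (m * n) = μ m + μ n)
    (n : ℕ) (hn : 0 < n) (S : Finset ℕ) (hS : ∀ p ∈ S, p.Prime ∧ p ^ 2 ∣ n) :
    μ n ≤ Real.log n - ∑ p ∈ S, (Real.log p - Real.log 2) := by
  have hsub : S ⊆ n.primeFactors := fun p hp =>
    Nat.mem_primeFactors.2 ⟨(hS p hp).1,
      dvd_trans (dvd_pow_self p two_ne_zero) (hS p hp).2, hn.ne'⟩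
  rw [mu_factor μ hμp hμmul n hn, log_factor n hn.ne']
  have key : ∑ p ∈ S, (Real.log p - Real.log 2) ≤
      ∑ p ∈ n.primeFactors,
        ((n.factorization p : ℝ) * Real.log p
          - (Real.log p + Real.log (n.factorization p))) := by
    calc ∑ p ∈ S, (Real.log p - Real.log 2)
        ≤ ∑ p ∈ S, ((n.factorization p : ℝ) * Real.log p
            - (Real.log p + Real.log (n.factorization p))) := by
          refine Finset.sum_le_sum fun p hp => ?_
          have hpp := (hS p hp).1
          have hk2 : 2 ≤ n.factorization p :=
            (hpp.pow_dvd_iff_le_factorization hn.ne').mp (hS p hp).2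
          have := term_gain hpp.two_le hk2
          linarith
      _ ≤ _ := by
          refine Finset.sum_le_sum_of_subset_of_nonneg hsub fun p hp _ => ?_
          have hpp : p.Prime := (Nat.mem_primeFactors.1 hp).1
          have hk1 : 1 ≤ n.factorization p :=
            hpp.factorization_pos_of_dvd hn.ne' (Nat.mem_primeFactors.1 hp).2.1
          have := term_nonneg hpp.two_le hk1
          linarith
  rw [Finset.sum_sub_distrib, Finset.sum_sub_distrib] at key
  rw [Finset.sum_sub_distrib]
  linarith

private lemma wief1093 : (1093:ℕ) ^ 2 ∣ 2 ^ 1092 - 1 := by decide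

private lemma wief3511 : (3511:ℕ) ^ 2 ∣ 2 ^ 3510 - 1 := by decide

private lemma dvd21 {a b : ℕ} (h : a ∣ b) : 2 ^ a - 1 ∣ 2 ^ b - 1 := by
  obtain ⟨m, rfl⟩ := h
  have := Nat.sub_dvd_pow_sub_pow (2 ^ a) 1 m
  simpa [← pow_mul] using this

theorem stmt_18 (μ : ℕ → ℝ)
    (hμp : ∀ p n : ℕ, p.Prime → 0 < n → μ (p ^ n) = Real.log p + Real.log n)
    (hμmul : ∀ m n : ℕ, 0 < m → 0 < n → Nat.Coprime m n → μ (m * n) = μ m + μ n)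
    (hWinf : {p : ℕ | p.Prime ∧ p ^ 2 ∣ 2 ^ (p - 1) - 1}.Infinite) :
    {t : ℕ × ℕ × ℕ | 0 < t.1 ∧ 0 < t.2.1 ∧ 0 < t.2.2 ∧ Nat.Coprime t.1 t.2.1 ∧
        t.1 + t.2.1 = t.2.2 ∧ Real.log t.2.2 > μ (t.1 * t.2.1 * t.2.2)}.Infinite ∧
      {L : ℕ | Real.log (2 ^ L) > μ ((2 ^ L - 1) * 2 ^ L)}.Infinite := by
  have key : ∀ N : ℕ, ∃ L : ℕ, N < L ∧ 0 < L ∧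
      Real.log ((2 ^ L : ℕ) : ℝ) > μ ((2 ^ L - 1) * 2 ^ L) := by
    intro N
    obtain ⟨q, hqW, hqgt⟩ := hWinf.exists_gt (max 3511 (N + 1))
    have hq3511 : 3511 < q := lt_of_le_of_lt (le_max_left _ _) hqgt
    have hqN : N + 1 < q := lt_of_le_of_lt (le_max_right _ _) hqgt
    obtain ⟨hqp, hqd⟩ := hqW
    obtain ⟨L, hLdef⟩ : ∃ L, L = Nat.lcm 49140 (q - 1) := ⟨_, rfl⟩
    have hqodd : Odd q := hqp.odd_of_ne_two (by omega)
    have heven : 2 ∣ (q - 1) := by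
      obtain ⟨k, hk⟩ := hqodd
      omega
    have hq1pos : 0 < q - 1 := by omega
    have hLpos : 0 < L := hLdef ▸ Nat.lcm_pos (by norm_num) hq1pos
    have hdvd1 : 49140 ∣ L := hLdef ▸ Nat.dvd_lcm_left _ _
    have hdvd2 : (q - 1) ∣ L := hLdef ▸ Nat.dvd_lcm_right _ _
    have hLge : q - 1 ≤ L := Nat.le_of_dvd hLpos hdvd2
    have hNL : N < L := by omega
    have hgcdpos : 0 < Nat.gcd 49140 (q - 1) := Nat.gcd_pos_of_pos_left _ (by norm_num)
    have hgcd2 : 2 ≤ Nat.gcd 49140 (q - 1) :=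
      Nat.le_of_dvd hgcdpos (Nat.dvd_gcd (by norm_num) heven)
    have hgl : Nat.gcd 49140 (q - 1) * L = 49140 * (q - 1) := hLdef ▸ Nat.gcd_mul_lcm _ _
    have hub : 2 * L ≤ 49140 * (q - 1) := by
      calc 2 * L ≤ Nat.gcd 49140 (q - 1) * L := Nat.mul_le_mul_right _ hgcd2
        _ = _ := hgl
    have h16 : 16 * L ≤ 3837523 * q := by omega
    have h2L : (2:ℕ) ≤ 2 ^ L := by
      have := Nat.one_lt_two_pow hLpos.ne'
      omega
    have hMpos : 0 < 2 ^ L - 1 := by omega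
    have hcop : Nat.Coprime (2 ^ L - 1) (2 ^ L) := by
      have h : 2 ^ L - 1 + 1 = 2 ^ L := by omega
      rw [← h]
      simp [Nat.Coprime, Nat.gcd_comm (2 ^ L - 1) (2 ^ L - 1 + 1), Nat.succ_sub_one]
    have hmul := hμmul (2 ^ L - 1) (2 ^ L) hMpos (by positivity) hcop
    have hpow := hμp 2 L Nat.prime_two hLpos
    push_cast at hpow
    have hne1 : (1093:ℕ) ≠ q := by omega
    have hne2 : (3511:ℕ) ≠ q := by omega
    have h1093 : (1093:ℕ) ^ 2 ∣ 2 ^ L - 1 :=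
      dvd_trans wief1093
        (dvd21 (dvd_trans (show (1092:ℕ) ∣ 49140 by norm_num) hdvd1))
    have h3511 : (3511:ℕ) ^ 2 ∣ 2 ^ L - 1 :=
      dvd_trans wief3511
        (dvd21 (dvd_trans (show (3510:ℕ) ∣ 49140 by norm_num) hdvd1))
    have hq2 : q ^ 2 ∣ 2 ^ L - 1 := dvd_trans hqd (dvd21 hdvd2)
    have hS : ∀ p ∈ ({1093, 3511, q} : Finset ℕ), p.Prime ∧ p ^ 2 ∣ 2 ^ L - 1 := by
      intro p hp
      simp only [Finset.mem_insert, Finset.mem_singleton] at hp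
      rcases hp with rfl | rfl | rfl
      · exact ⟨by norm_num, h1093⟩
      · exact ⟨by norm_num, h3511⟩
      · exact ⟨hqp, hq2⟩
    have hml := mu_le μ hμp hμmul (2 ^ L - 1) hMpos {1093, 3511, q} hS
    have hsum : ∑ p ∈ ({1093, 3511, q} : Finset ℕ), (Real.log p - Real.log 2)
        = (Real.log 1093 - Real.log 2) + (Real.log 3511 - Real.log 2)
          + (Real.log q - Real.log 2) := by
      rw [show ({1093, 3511, q} : Finset ℕ) = insert 1093 (insert 3511 {q}) from rfl,
        Finset.sum_insert (by simp [hne1]), Finset.sum_insert (by simp [hne2]),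
        Finset.sum_singleton]
      push_cast
      ring
    rw [hsum] at hml
    have hlogM : Real.log ((2 ^ L - 1 : ℕ) : ℝ) < L * Real.log 2 := by
      have hlt : ((2 ^ L - 1 : ℕ) : ℝ) < ((2 ^ L : ℕ) : ℝ) := by
        exact_mod_cast (by omega : 2 ^ L - 1 < 2 ^ L)
      have h2 := Real.log_lt_log (by exact_mod_cast hMpos) hlt
      rwa [show ((2 ^ L : ℕ) : ℝ) = (2:ℝ) ^ L by push_cast; ring, Real.log_pow] at h2
    have hLR : (0:ℝ) < L := by exact_mod_cast hLpos
    have hqR : (0:ℝ) < q := by exact_mod_cast (by omega : 0 < q)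
    have hlogle : Real.log (16 * (L:ℝ)) ≤ Real.log (3837523 * (q:ℝ)) := by
      apply Real.log_le_log (by positivity)
      exact_mod_cast h16
    rw [Real.log_mul (by norm_num) hLR.ne', Real.log_mul (by norm_num) hqR.ne'] at hlogle
    have h16log : Real.log (16:ℝ) = 4 * Real.log 2 := by
      rw [show (16:ℝ) = 2 ^ 4 by norm_num, Real.log_pow]
      norm_num
    have hsplit : Real.log (3837523:ℝ) = Real.log 1093 + Real.log 3511 := by
      rw [show (3837523:ℝ) = 1093 * 3511 by norm_num,
        Real.log_mul (by norm_num) (by norm_num)]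
    rw [h16log, hsplit] at hlogle
    refine ⟨L, hNL, hLpos, ?_⟩
    have hgoal : Real.log ((2 ^ L : ℕ) : ℝ) = L * Real.log 2 := by
      rw [show ((2 ^ L : ℕ) : ℝ) = (2:ℝ) ^ L by push_cast; ring, Real.log_pow]
    rw [hgoal, gt_iff_lt, hmul, hpow]
    linarith
  have hT : {L : ℕ | 0 < L ∧
      Real.log ((2 ^ L : ℕ) : ℝ) > μ ((2 ^ L - 1) * 2 ^ L)}.Infinite := by
    apply Set.infinite_of_forall_exists_gt
    intro N
    obtain ⟨L, h1, h2, h3⟩ := key N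
    exact ⟨L, ⟨h2, h3⟩, h1⟩
  constructor
  · have himg := hT.image (f := fun L => ((1, 2 ^ L - 1, 2 ^ L) : ℕ × ℕ × ℕ)) ?_
    · refine himg.mono ?_
      rintro t ⟨L, ⟨hL0, hLgt⟩, rfl⟩
      have h2L : (2:ℕ) ≤ 2 ^ L := by
        have := Nat.one_lt_two_pow hL0.ne'
        omega
      simp only [Set.mem_setOf_eq]
      refine ⟨one_pos, by omega, by positivity, Nat.coprime_one_left _, by omega, ?_⟩
      simpa [one_mul] using hLgt
    · intro a _ b _ hab
      simp only [Prod.mk.injEq] at hab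
      exact Nat.pow_right_injective le_rfl hab.2.2
  · refine hT.mono fun L hL => ?_
    simp only [Set.mem_setOf_eq]
    rw [show ((2:ℝ) ^ L) = ((2 ^ L : ℕ) : ℝ) by push_cast; ring]
    exact hL.2
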